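/- Let κ and κ' be two edge multiplicity functions on 𝔾 = J(P) that are UD-dual, meaning κ(λ,ν) κ'(ρ,ν) = κ'(μ,λ) κ(μ,ρ) for every quadrangle μ, ρ, λ, ν. Then κ and κ' are gauge equivalent: there exists a function g : 𝔾 → ℝ_{>0} such that κ(μ,λ) = (g(μ)/g(λ)) κ'(μ,λ) for every edge μ ↗ λ. -/

import Mathlib

open scoped BigOperators Classical

namespace IdealGraph

variable {P : Type*} [PartialOrder P]

/-- A finite order ideal of the poset `P`, encoded as a down-closed `Finset`. -/
def IsIdealF (s : Finset P) : Prop := ∀ ⦃x⦄, x ∈ s → ∀ ⦃y⦄, y ≤ x → y ∈ s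

/-- The vertex set of the branching graph of ideals `𝔾 = J(P)`. -/
abbrev G (P : Type*) [PartialOrder P] := {s : Finset P // IsIdealF s}

/-- The `n`-th level `𝔾_n` of the branching graph. -/
abbrev Lvl (P : Type*) [PartialOrder P] (n : ℕ) := {s : Finset P // IsIdealF s ∧ s.card = n}

/-- `CoversF μ l` : `μ ↗ l` is an edge of the branching graph of ideals. -/
def CoversF (μ l : Finset P) : Prop :=
  IsIdealF μ ∧ IsIdealF l ∧ μ ⊆ l ∧ l.card = μ.card + 1

/-- All levels `𝔾_n` of the graph are finite. -/
def LevelsFinite (P : Type*) [PartialOrder P] : Prop :=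
  ∀ n : ℕ, {s : Finset P | IsIdealF s ∧ s.card = n}.Finite

/-- An edge multiplicity function is (strictly) positive on all edges. -/
def EdgePositive (κ : Finset P → Finset P → ℝ) : Prop :=
  ∀ μ l, CoversF μ l → 0 < κ μ l

/-- UD-self-duality of a multiplicity function: for every quadrangle `μ ρ ν λ`. -/
def UDSelfDual (κ : Finset P → Finset P → ℝ) : Prop :=
  ∀ μ ρ l ν : Finset P, CoversF μ ρ → CoversF ρ ν → CoversF μ l → CoversF l ν →
    ρ ≠ l → κ μ l * κ μ ρ = κ l ν * κ ρ ν

/-- The value of a function `q : P → R` on the box `l ∖ μ` of an edge `μ ↗ l`. -/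
noncomputable def bx {R : Type*} [AddCommMonoid R] (q : P → R) (μ l : Finset P) : R :=
  ∑ x ∈ l \ μ, q x

/-- The Kerov condition with parameter `t` for the function `q2 = 𝗊²`. -/
def KerovCond (κ : Finset P → Finset P → ℝ) (q2 : P → ℂ) (t : ℂ) : Prop :=
  ∀ l : Finset P, IsIdealF l →
    (∑' ν : {ν : Finset P // CoversF l ν}, (κ l ν.1 : ℂ) ^ 2 * bx q2 l ν.1) -
      (∑' μ : {μ : Finset P // CoversF μ l}, (κ μ.1 l : ℂ) ^ 2 * bx q2 μ.1 l)
      = 2 * (l.card : ℂ) + t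

/-- Weighted number of saturated chains of length `n` from the ideal `μ` up to the ideal `l`. -/
noncomputable def dimRel (κ : Finset P → Finset P → ℝ) : ℕ → Finset P → Finset P → ℝ
  | 0, μ, l => if μ = l then 1 else 0
  | n + 1, μ, l =>
      ∑ x ∈ l, if CoversF (l.erase x) l ∧ μ ⊆ l.erase x
        then κ (l.erase x) l * dimRel κ n μ (l.erase x) else 0

/-- Relative dimension `dim(μ, l)`. -/
noncomputable def dimI (κ : Finset P → Finset P → ℝ) (μ l : Finset P) : ℝ :=
  dimRel κ (l.card - μ.card) μ l

/-- Dimension `dim l = dim(∅, l)`. -/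
noncomputable def dimT (κ : Finset P → Finset P → ℝ) (l : Finset P) : ℝ :=
  dimI κ ∅ l

/-- The relative dimension function `P*_μ`. -/
noncomputable def Pstar (κ : Finset P → Finset P → ℝ) (μ l : Finset P) : ℝ :=
  (l.card.descFactorial μ.card : ℝ) * dimI κ μ l / dimT κ l

/-- The mixed measure `M_ξ`. -/
noncomputable def Mxi (κ : Finset P → Finset P → ℝ) (q : P → ℝ) (t ξ : ℝ) (l : Finset P) : ℝ :=
  (1 - ξ) ^ t * ξ ^ l.card * (dimT κ l / (Nat.factorial l.card : ℝ)) ^ 2 * ∏ x ∈ l, q x ^ 2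

/-- The coherent measure `M_n(l)` (for `n = |l|`). -/
noncomputable def Mcoh (κ : Finset P → Finset P → ℝ) (q : P → ℝ) (t : ℝ) (l : Finset P) : ℝ :=
  dimT κ l ^ 2 * (∏ x ∈ l, q x ^ 2) /
    ((Nat.factorial l.card : ℝ) * Polynomial.eval t (ascPochhammer ℝ l.card))

/-- The jump rates `Q(l, ρ)` of the Markov jump dynamics. -/
noncomputable def Qrate (κ : Finset P → Finset P → ℝ) (q : P → ℝ) (t ξ : ℝ)
    (l ρ : Finset P) : ℝ :=
  if CoversF ρ l then (1 - ξ)⁻¹ * l.card * (κ ρ l * dimT κ ρ / dimT κ l)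
  else if CoversF l ρ then
    (1 - ξ)⁻¹ * (ξ * ((l.card : ℝ) + t)) *
      ((Mcoh κ q t ρ / Mcoh κ q t l) * (κ l ρ * dimT κ l / dimT κ ρ))
  else if ρ = l then -((1 - ξ)⁻¹ * ((l.card : ℝ) + ξ * ((l.card : ℝ) + t)))
  else 0

/-- The function `𝔐_l`. -/
noncomputable def Mfrak (κ : Finset P → Finset P → ℝ) (q : P → ℝ) (ξ : ℝ)
    (l ν : Finset P) : ℝ :=
  ∑ μ ∈ l.powerset.filter (fun s => IsIdealF s),
    (ξ / (ξ - 1)) ^ (l.card - μ.card) *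
      (dimI κ μ l / (Nat.factorial (l.card - μ.card) : ℝ)) *
      (∏ x ∈ l \ μ, q x ^ 2) * Pstar κ μ ν

/-- The operator `U` built from `κ` and `q`. -/
noncomputable def Uop (κ : Finset P → Finset P → ℝ) (q : P → ℂ) (f : Finset P → ℂ) :
    Finset P → ℂ :=
  fun l => ∑' μ : {μ : Finset P // CoversF μ l}, (κ μ.1 l : ℂ) * bx q μ.1 l * f μ.1

/-- The operator `D` built from `κ` and `q`. -/
noncomputable def Dop (κ : Finset P → Finset P → ℝ) (q : P → ℂ) (f : Finset P → ℂ) :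
    Finset P → ℂ :=
  fun l => ∑' ν : {ν : Finset P // CoversF l ν}, (κ l ν.1 : ℂ) * bx q l ν.1 * f ν.1

/-- The standard basis vector `δ_l`. -/
noncomputable def delta (l : Finset P) : Finset P → ℂ := fun ρ => if ρ = l then 1 else 0


/-- Ratio of the two multiplicity functions on an edge. -/
noncomputable def rat (κ κ' : Finset P → Finset P → ℝ) (μ l : Finset P) : ℝ := κ' μ l / κ μ l

/-- The gauge function, defined by stripping a chosen maximal element. -/
noncomputable def gg (κ κ' : Finset P → Finset P → ℝ) (s : Finset P) : ℝ :=
  if h : s.Nonempty then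
    gg κ κ' (s.erase (Classical.choose (s.exists_maximal h))) *
      rat κ κ' (s.erase (Classical.choose (s.exists_maximal h))) s
  else 1
termination_by s.card
decreasing_by
  exact Finset.card_erase_lt_of_mem (Classical.choose_spec (s.exists_maximal h)).1

lemma inter_ideal {μ ρ : Finset P} (hμ : IsIdealF μ) (hρ : IsIdealF ρ) :
    IsIdealF (μ ∩ ρ) := by
  intro x hx y hy
  simp only [Finset.mem_inter] at hx ⊢
  exact ⟨hμ hx.1 hy, hρ hx.2 hy⟩

lemma covers_erase_maximal {s : Finset P} (hs : IsIdealF s) {m : P} (hm : m ∈ s)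
    (hmax : ∀ b ∈ s, ¬ m < b) : CoversF (s.erase m) s := by
  refine ⟨?_, hs, Finset.erase_subset _ _, ?_⟩
  · intro x hx y hy
    rw [Finset.mem_erase] at hx ⊢
    refine ⟨?_, hs hx.2 hy⟩
    rintro rfl
    exact hmax x hx.2 (lt_of_le_of_ne hy (Ne.symm hx.1))
  · rw [Finset.card_erase_of_mem hm]
    have : 0 < s.card := Finset.card_pos.mpr ⟨m, hm⟩
    omega

/-- The diamond property of the branching graph of ideals. -/
lemma diamond {μ ρ ν : Finset P} (hμ : CoversF μ ν) (hρ : CoversF ρ ν) (hne : μ ≠ ρ) :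
    CoversF (μ ∩ ρ) μ ∧ CoversF (μ ∩ ρ) ρ := by
  obtain ⟨hμi, hνi, hμν, hcμ⟩ := hμ
  obtain ⟨hρi, -, hρν, hcρ⟩ := hρ
  have hca : (ν \ μ).card = 1 := by rw [Finset.card_sdiff_of_subset hμν]; omega
  have hcb : (ν \ ρ).card = 1 := by rw [Finset.card_sdiff_of_subset hρν]; omega
  obtain ⟨a, ha⟩ := Finset.card_eq_one.mp hca
  obtain ⟨b, hb⟩ := Finset.card_eq_one.mp hcb
  have hμeq : μ = ν \ {a} := by
    rw [← ha, sdiff_sdiff_eq_self hμν]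
  have hρeq : ρ = ν \ {b} := by
    rw [← hb, sdiff_sdiff_eq_self hρν]
  have hab : a ≠ b := by
    rintro rfl
    exact hne (hμeq.trans hρeq.symm)
  have haν : a ∈ ν := by
    have : a ∈ ν \ μ := by rw [ha]; exact Finset.mem_singleton_self a
    exact (Finset.mem_sdiff.mp this).1
  have hbν : b ∈ ν := by
    have : b ∈ ν \ ρ := by rw [hb]; exact Finset.mem_singleton_self b
    exact (Finset.mem_sdiff.mp this).1
  have hbμ : b ∈ μ := by
    rw [hμeq]; simp [hbν, hab.symm]
  have haρ : a ∈ ρ := by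
    rw [hρeq]; simp [haν, hab]
  have hintμ : μ ∩ ρ = μ.erase b := by
    ext x
    simp only [Finset.mem_inter, Finset.mem_erase, hρeq, Finset.mem_sdiff,
      Finset.mem_singleton, hμeq]
    tauto
  have hintρ : μ ∩ ρ = ρ.erase a := by
    ext x
    simp only [Finset.mem_inter, Finset.mem_erase, hρeq, Finset.mem_sdiff,
      Finset.mem_singleton, hμeq]
    tauto
  have hii : IsIdealF (μ ∩ ρ) := inter_ideal hμi hρi
  constructor
  · refine ⟨hii, hμi, Finset.inter_subset_left, ?_⟩
    rw [hintμ, Finset.card_erase_of_mem hbμ]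
    have : 0 < μ.card := Finset.card_pos.mpr ⟨b, hbμ⟩
    omega
  · refine ⟨hii, hρi, Finset.inter_subset_right, ?_⟩
    rw [hintρ, Finset.card_erase_of_mem haρ]
    have : 0 < ρ.card := Finset.card_pos.mpr ⟨a, haρ⟩
    omega

lemma rat_quad {κ κ' : Finset P → Finset P → ℝ}
    (hκ : EdgePositive κ) (hκ' : EdgePositive κ')
    (hdual : ∀ μ ρ l ν : Finset P, CoversF μ ρ → CoversF ρ ν → CoversF μ l → CoversF l ν →
      ρ ≠ l → κ l ν * κ' ρ ν = κ' μ l * κ μ ρ)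
    {μ ρ l ν : Finset P} (h1 : CoversF μ ρ) (h2 : CoversF ρ ν) (h3 : CoversF μ l)
    (h4 : CoversF l ν) (hne : ρ ≠ l) :
    rat κ κ' μ ρ * rat κ κ' ρ ν = rat κ κ' μ l * rat κ κ' l ν := by
  have eq1 := hdual μ ρ l ν h1 h2 h3 h4 hne
  have eq2 := hdual μ l ρ ν h3 h4 h1 h2 (Ne.symm hne)
  have a := hκ μ ρ h1; have b := hκ ρ ν h2; have c := hκ μ l h3; have d := hκ l ν h4
  have a' := hκ' μ ρ h1; have b' := hκ' ρ ν h2; have c' := hκ' μ l h3; have d' := hκ' l ν h4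
  rw [rat, rat, rat, rat, div_mul_div_comm, div_mul_div_comm,
    div_eq_div_iff (by positivity) (by positivity)]
  linear_combination (κ' μ ρ * κ μ l) * eq1 - (κ' μ l * κ μ ρ) * eq2

lemma gg_spec {κ κ' : Finset P → Finset P → ℝ}
    (hκ : EdgePositive κ) (hκ' : EdgePositive κ')
    (hdual : ∀ μ ρ l ν : Finset P, CoversF μ ρ → CoversF ρ ν → CoversF μ l → CoversF l ν →
      ρ ≠ l → κ l ν * κ' ρ ν = κ' μ l * κ μ ρ) :
    ∀ s : Finset P, IsIdealF s →
      0 < gg κ κ' s ∧ ∀ μ, CoversF μ s → gg κ κ' s = gg κ κ' μ * rat κ κ' μ s := by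
  have hrpos : ∀ {x y : Finset P}, CoversF x y → 0 < rat κ κ' x y :=
    fun hc => div_pos (hκ' _ _ hc) (hκ _ _ hc)
  intro s
  induction s using Finset.strongInduction with
  | _ s ih =>
    intro hs
    by_cases h : s.Nonempty
    · set m := Classical.choose (s.exists_maximal h) with hmdef
      obtain ⟨hm, hmax⟩ := Classical.choose_spec (s.exists_maximal h)
      have hρs : CoversF (s.erase m) s := covers_erase_maximal hs hm
        (fun b hb hlt => absurd hlt (not_lt_of_ge (hmax hb hlt.le)))
      have hρsub : s.erase m ⊂ s := Finset.erase_ssubset hm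
      obtain ⟨hρpos, hρpath⟩ := ih _ hρsub hρs.1
      have hggs : gg κ κ' s = gg κ κ' (s.erase m) * rat κ κ' (s.erase m) s := by
        rw [gg, dif_pos h]
      refine ⟨by rw [hggs]; exact mul_pos hρpos (hrpos hρs), ?_⟩
      intro μ hμs
      by_cases hμρ : μ = s.erase m
      · rw [hμρ]; exact hggs
      · obtain ⟨hσμ, hσρ⟩ := diamond hμs hρs hμρ
        have hμsub : μ ⊂ s := by
          refine Finset.ssubset_iff_subset_ne.mpr ⟨hμs.2.2.1, ?_⟩
          intro hcontra
          have := hμs.2.2.2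
          rw [hcontra] at this; omega
        obtain ⟨hμpos, hμpath⟩ := ih _ hμsub hμs.1
        have e1 := hμpath _ hσμ
        have e2 := hρpath _ hσρ
        have hq := rat_quad hκ hκ' hdual hσρ hρs hσμ hμs (Ne.symm hμρ)
        rw [hggs, e2, e1, mul_assoc, hq, mul_assoc]
    · have hse : s = ∅ := Finset.not_nonempty_iff_eq_empty.mp h
      have hg1 : gg κ κ' s = 1 := by rw [gg, dif_neg h]
      refine ⟨by rw [hg1]; exact one_pos, ?_⟩
      intro μ hμs
      exfalso
      have := hμs.2.2.2
      rw [hse] at this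
      simp at this

/-- UD-dual multiplicity functions are gauge equivalent. -/
theorem statement1 {P : Type*} [PartialOrder P]
    (κ κ' : Finset P → Finset P → ℝ)
    (hκ : EdgePositive κ) (hκ' : EdgePositive κ') (hLF : LevelsFinite P)
    (hdual : ∀ μ ρ l ν : Finset P, CoversF μ ρ → CoversF ρ ν → CoversF μ l → CoversF l ν →
      ρ ≠ l → κ l ν * κ' ρ ν = κ' μ l * κ μ ρ) :
    ∃ g : Finset P → ℝ, (∀ s : Finset P, IsIdealF s → 0 < g s) ∧
      ∀ μ l : Finset P, CoversF μ l → κ μ l = (g μ / g l) * κ' μ l := by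
  refine ⟨gg κ κ', fun s hs => (gg_spec hκ hκ' hdual s hs).1, ?_⟩
  intro μ l hc
  have h1 := (gg_spec hκ hκ' hdual l hc.2.1).2 μ hc
  have hgμ : 0 < gg κ κ' μ := (gg_spec hκ hκ' hdual μ hc.1).1
  have hgl : 0 < gg κ κ' l := (gg_spec hκ hκ' hdual l hc.2.1).1
  have hκp := hκ μ l hc
  have hκ'p := hκ' μ l hc
  rw [rat] at h1
  field_simp at h1 ⊢
  linear_combination h1

end IdealGraph
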